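/- If (ℕ, S, C) is a complete Mammen space, then the cardinality of S is at least add(M), the additivity of the meager ideal on Cantor space. In particular, S is uncountable. -/

import Mathlib

open Set Topology TopologicalSpace

/-- A topology is perfect if every nonempty open set is infinite. -/
def IsPerfectTop {U : Type*} (T : TopologicalSpace U) : Prop :=
  ∀ V : Set U, IsOpen[T] V → V.Nonempty → V.Infinite

/-- A perfect topology is maximal if no strictly finer topology is perfect. -/
def IsMaxPerfectTop {U : Type*} (T : TopologicalSpace U) : Prop :=
  IsPerfectTop T ∧ ∀ T' : TopologicalSpace U, T' ≤ T → IsPerfectTop T' → T' = T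

/-- `(U, T, C)` is a Mammen space. -/
structure IsMammen {U : Type*} (T : TopologicalSpace U) (C : Set (Set U)) : Prop where
  nonemptyU : Nonempty U
  perfect : IsPerfectTop T
  hausdorff : @T2Space U T
  exNonempty : ∃ c ∈ C, c.Nonempty
  unionMem : ∀ c ∈ C, ∀ d ∈ C, c ∪ d ∈ C
  interMem : ∀ c ∈ C, ∀ d ∈ C, c ∩ d ∈ C
  singletonMem : ∀ c ∈ C, c.Nonempty → ∃ x ∈ c, ({x} : Set U) ∈ C
  emptyMem : ∅ ∈ C
  openInterC : ∀ s ∈ C, IsOpen[T] s → s = ∅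
  interOpenMem : ∀ c ∈ C, ∀ s : Set U, IsOpen[T] s → c ∩ s ∈ C

/-- A Mammen space is complete if every subset is the union of an open set
and a choice category. -/
def MammenComplete {U : Type*} (T : TopologicalSpace U) (C : Set (Set U)) : Prop :=
  ∀ X : Set U, ∃ s c, IsOpen[T] s ∧ c ∈ C ∧ X = s ∪ c


/-- The additivity of the meager ideal on Cantor space: the least cardinality of a
family of meager sets whose union is non-meager. -/
noncomputable def addMeager : Cardinal :=
  sInf {c : Cardinal | ∃ (ι : Type) (F : ι → Set (ℕ → Bool)),
    Cardinal.mk ι = c ∧ (∀ i, IsMeagre (F i)) ∧ ¬ IsMeagre (⋃ i, F i)}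

lemma flip_dense_open (V : Set ℕ) (hV : V.Infinite) (b : Bool) (m : ℕ) :
    {x : ℕ → Bool | ∃ n, n ∈ V ∧ m ≤ n ∧ x n = b} ∈ residual (ℕ → Bool) := by
  apply residual_of_dense_open
  · have : {x : ℕ → Bool | ∃ n, n ∈ V ∧ m ≤ n ∧ x n = b}
        = ⋃ (n : ℕ) (_ : n ∈ V ∧ m ≤ n), (fun x : ℕ → Bool => x n) ⁻¹' {b} := by
      ext x; simp [and_assoc]
    rw [this]
    exact isOpen_iUnion fun n => isOpen_iUnion fun _ =>
      (continuous_apply n).isOpen_preimage _ (isOpen_discrete _)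
  · rw [dense_iff_inter_open]
    intro O hO ⟨x, hx⟩
    obtain ⟨I, u, hu, hsub⟩ := isOpen_pi_iff.1 hO x hx
    have : (V \ (↑I ∪ {k | k < m})).Infinite :=
      hV.diff ((I.finite_toSet).union (Set.finite_Iio m))
    obtain ⟨n, hnV, hn⟩ := this.nonempty
    simp only [Set.mem_union, Set.mem_setOf_eq, not_or, Finset.mem_coe, not_lt] at hn
    refine ⟨Function.update x n b, hsub ?_, ⟨n, hnV, hn.2, Function.update_self _ _ _⟩⟩
    intro i hi
    rw [Function.update_of_ne (by rintro rfl; exact hn.1 hi)]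
    exact (hu i hi).2

lemma meagre_flip (V : Set ℕ) (hV : V.Infinite) (b : Bool) :
    IsMeagre {x : ℕ → Bool | ¬ {n | n ∈ V ∧ x n = b}.Infinite} := by
  rw [IsMeagre]
  refine Filter.mem_of_superset
    ((countable_iInter_mem).2 fun m => flip_dense_open V hV b m) ?_
  intro x hx
  simp only [Set.mem_iInter, Set.mem_setOf_eq] at hx
  simp only [Set.mem_compl_iff, Set.mem_setOf_eq, not_not]
  apply Set.infinite_of_forall_exists_gt
  intro a
  obtain ⟨n, hnV, hle, hb⟩ := hx (a + 1)
  exact ⟨n, ⟨hnV, hb⟩, hle⟩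

lemma not_meagre_univ : ¬ IsMeagre (Set.univ : Set (ℕ → Bool)) := by
  intro hm
  rw [IsMeagre, Set.compl_univ] at hm
  exact Set.not_nonempty_empty ((dense_of_mem_residual hm).nonempty)

lemma meagre_singleton (x : ℕ → Bool) : IsMeagre ({x} : Set (ℕ → Bool)) := by
  rw [IsMeagre]
  apply residual_of_dense_open (isClosed_singleton.isOpen_compl)
  rw [dense_iff_inter_open]
  intro O hO ⟨z, hz⟩
  by_cases hzx : z = x
  · obtain ⟨I, u, hu, hsub⟩ := isOpen_pi_iff.1 hO z hz
    obtain ⟨n, hn⟩ := Set.Infinite.nonempty ((Set.infinite_univ (α := ℕ)).diff I.finite_toSet)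
    refine ⟨Function.update z n (!z n), hsub ?_, ?_⟩
    · intro i hi
      rw [Function.update_of_ne (by rintro rfl; exact hn.2 hi)]
      exact (hu i hi).2
    · simp only [Set.mem_compl_iff, Set.mem_singleton_iff]
      intro hcontr
      have := congrFun hcontr n
      rw [Function.update_self, hzx] at this
      simp at this
  · exact ⟨z, hz, hzx⟩

lemma addSet_nonempty : {c : Cardinal | ∃ (ι : Type) (F : ι → Set (ℕ → Bool)),
    Cardinal.mk ι = c ∧ (∀ i, IsMeagre (F i)) ∧ ¬ IsMeagre (⋃ i, F i)}.Nonempty := by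
  refine ⟨_, (ℕ → Bool), fun x => {x}, rfl, meagre_singleton, ?_⟩
  have : (⋃ x : ℕ → Bool, ({x} : Set (ℕ → Bool))) = Set.univ := by ext y; simp
  rw [this]
  exact not_meagre_univ

lemma addSet_gt (c : Cardinal) (hc : c ∈ {c : Cardinal | ∃ (ι : Type) (F : ι → Set (ℕ → Bool)),
    Cardinal.mk ι = c ∧ (∀ i, IsMeagre (F i)) ∧ ¬ IsMeagre (⋃ i, F i)}) :
    Cardinal.aleph0 < c := by
  obtain ⟨ι, F, rfl, hm, hn⟩ := hc
  by_contra hle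
  push_neg at hle
  have : Countable ι := Cardinal.mk_le_aleph0_iff.1 hle
  apply hn
  rw [IsMeagre, Set.compl_iUnion]
  exact countable_iInter_mem.2 fun i => hm i

lemma aleph0_lt_addMeager : Cardinal.aleph0 < addMeager :=
  addSet_gt _ (csInf_mem addSet_nonempty)

theorem stmt19 (T : TopologicalSpace ℕ) (C : Set (Set ℕ))
    (h : IsMammen T C) (hcomp : MammenComplete T C) :
    addMeager ≤ Cardinal.mk {V : Set ℕ | IsOpen[T] V} ∧
      ¬ Set.Countable {V : Set ℕ | IsOpen[T] V} := by
  classical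
  have hBig : addMeager ≤ Cardinal.mk {V : Set ℕ | IsOpen[T] V} := by
    by_contra hlt
    push_neg at hlt
    set S : Set (Set ℕ) := {V : Set ℕ | IsOpen[T] V} with hS
    let F : ↥S ⊕ Bool → Set (ℕ → Bool) := fun i =>
      match i with
      | Sum.inl V => {x | (V : Set ℕ).Infinite ∧ (V : Set ℕ)ᶜ.Infinite ∧
          ¬ ({n | n ∈ (V : Set ℕ) ∧ x n = false}.Infinite ∧
             {n | n ∈ (V : Set ℕ) ∧ x n = true}.Infinite)}
      | Sum.inr b => {x | ¬ {n | n ∈ (Set.univ : Set ℕ) ∧ x n = b}.Infinite}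
    have hmeag : ∀ i, IsMeagre (F i) := by
      rintro (⟨V, hV⟩ | b)
      · by_cases hVi : (V : Set ℕ).Infinite
        · have h1 := meagre_flip V hVi false
          have h2 := meagre_flip V hVi true
          have : F (Sum.inl ⟨V, hV⟩) ⊆
              {x : ℕ → Bool | ¬ {n | n ∈ V ∧ x n = false}.Infinite} ∪
              {x : ℕ → Bool | ¬ {n | n ∈ V ∧ x n = true}.Infinite} := by
            intro x hx
            rcases not_and_or.1 hx.2.2 with h' | h'
            · exact Or.inl h'
            · exact Or.inr h'
          refine IsMeagre.mono this ?_
          rw [IsMeagre, Set.compl_union]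
          exact Filter.inter_mem h1 h2
        · exact IsMeagre.empty.mono (fun x hx => absurd hx.1 hVi)
      · exact meagre_flip Set.univ Set.infinite_univ b
    have hunion : (⋃ i, F i) = Set.univ := by
      ext x
      simp only [Set.mem_univ, iff_true, Set.mem_iUnion]
      by_contra hx
      push_neg at hx
      have hTrueInf : {n | x n = true}.Infinite := by
        have := hx (Sum.inr true)
        simp only [F, Set.mem_setOf_eq, not_not, Set.mem_univ, true_and] at this
        simpa using this
      have hFalseInf : {n | x n = false}.Infinite := by
        have := hx (Sum.inr false)
        simp only [F, Set.mem_setOf_eq, not_not, Set.mem_univ, true_and] at this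
        simpa using this
      set X : Set ℕ := {n | x n = true} with hX
      have hXc : Xᶜ = {n | x n = false} := by
        ext n; simp [hX, Bool.not_eq_true]
      have main : ∀ Y : Set ℕ, ((∀ n ∈ Y, x n = true) ∨ (∀ n ∈ Y, x n = false)) →
          Yᶜ.Infinite → IsOpen[T] Y → Y = ∅ := by
        intro Y hY hYc hYo
        by_contra hne
        have hYi : Y.Infinite := h.perfect Y hYo (Set.nonempty_iff_ne_empty.2 hne)
        have hmem := hx (Sum.inl ⟨Y, hYo⟩)
        simp only [F, Set.mem_setOf_eq] at hmem
        push_neg at hmem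
        have hboth := hmem hYi hYc
        rcases hY with hY | hY
        · have hemp : {n | n ∈ Y ∧ x n = false} = ∅ := by
            ext n
            simp only [Set.mem_setOf_eq, Set.mem_empty_iff_false, iff_false]
            rintro ⟨h1, h2⟩
            rw [hY n h1] at h2
            exact Bool.noConfusion h2
          exact Set.finite_empty.not_infinite (hemp ▸ hboth.1)
        · have hemp : {n | n ∈ Y ∧ x n = true} = ∅ := by
            ext n
            simp only [Set.mem_setOf_eq, Set.mem_empty_iff_false, iff_false]
            rintro ⟨h1, h2⟩
            rw [hY n h1] at h2
            exact Bool.noConfusion h2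
          exact Set.finite_empty.not_infinite (hemp ▸ hboth.2)
      obtain ⟨s, c, hso, hcC, hXeq⟩ := hcomp X
      obtain ⟨s', c', hso', hcC', hXceq⟩ := hcomp Xᶜ
      have hsX : s ⊆ X := hXeq ▸ Set.subset_union_left
      have hs'Xc : s' ⊆ Xᶜ := hXceq ▸ Set.subset_union_left
      have hs0 : s = ∅ := by
        apply main s (Or.inl fun n hn => hsX hn) ?_ hso
        exact hFalseInf.mono (hXc ▸ Set.compl_subset_compl.2 hsX)
      have hs'0 : s' = ∅ := by
        apply main s' (Or.inr fun n hn => by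
          have := hs'Xc hn
          rw [hXc] at this
          exact this) ?_ hso'
        refine hTrueInf.mono ?_
        intro n hn
        intro hns'
        exact (hs'Xc hns') hn
      have hXc' : X = c := by rw [hXeq, hs0, Set.empty_union]
      have hXcc : Xᶜ = c' := by rw [hXceq, hs'0, Set.empty_union]
      have huC : Set.univ ∈ C := by
        have := h.unionMem c hcC c' hcC'
        rwa [← hXc', ← hXcc, Set.union_compl_self] at this
      have := h.openInterC Set.univ huC (@isOpen_univ ℕ T)
      exact (Set.univ_nonempty).ne_empty this
    have hnm : ¬ IsMeagre (⋃ i, F i) := by rw [hunion]; exact not_meagre_univ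
    have hmem : Cardinal.mk (↥S ⊕ Bool) ∈ {c : Cardinal | ∃ (ι : Type)
        (F : ι → Set (ℕ → Bool)),
        Cardinal.mk ι = c ∧ (∀ i, IsMeagre (F i)) ∧ ¬ IsMeagre (⋃ i, F i)} :=
      ⟨_, F, rfl, hmeag, hnm⟩
    have hle : addMeager ≤ Cardinal.mk (↥S ⊕ Bool) := csInf_le (OrderBot.bddBelow _) hmem
    have hsum : Cardinal.mk (↥S ⊕ Bool) = Cardinal.mk ↥S + 2 := by
      simp [Cardinal.mk_sum]
    have h2 : (2 : Cardinal) < addMeager :=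
      lt_trans (by exact_mod_cast Cardinal.nat_lt_aleph0 2) aleph0_lt_addMeager
    have : Cardinal.mk ↥S + 2 < addMeager :=
      Cardinal.add_lt_of_lt aleph0_lt_addMeager.le hlt h2
    rw [hsum] at hle
    exact absurd (lt_of_le_of_lt hle this) (lt_irrefl _)
  refine ⟨hBig, fun hcount => ?_⟩
  have : Cardinal.mk {V : Set ℕ | IsOpen[T] V} ≤ Cardinal.aleph0 :=
    Cardinal.le_aleph0_iff_set_countable.2 hcount
  exact absurd (lt_of_le_of_lt (hBig.trans this) aleph0_lt_addMeager) (lt_irrefl _)
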